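/- arXiv:2310.19739 — 2 statements merged into one kernel-verified Lean document; each statement's English description precedes it below -/
import Mathlib

section
/- Let 0 < σ ≤ 1 and τ, τ* ∈ ℝ, and define f(θ) = sin(σ(θ - τ*)) / (sin(θ - τ))^σ on (τ, τ + π). Assume τ ≠ τ* + kπ/σ and τ + π ≠ τ* + kπ/σ for every integer k. Then exactly one of the following holds: (1) f is monotonic, lim_{θ→τ+} f(θ) and lim_{θ→(τ+π)-} f(θ) are both infinite (±∞) and have opposite signs; (2) f is not monotonic and both limits are infinite with the same sign. -/
open Real Set Filter Topology

/-- If sin is positive at both endpoints of an interval of length < π, it is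
positive on the whole interval. -/
lemma sin_pos_on_Icc {l r : ℝ} (hl : 0 < Real.sin l) (hr : 0 < Real.sin r)
    (hlr : l ≤ r) (hlen : r - l < π) : ∀ t ∈ Set.Icc l r, 0 < Real.sin t := by
  have hπ := Real.pi_pos
  have h2π : (0:ℝ) < 2 * π := by linarith
  set m : ℤ := ⌊l / (2 * π)⌋ with hm
  have hshift : ∀ x : ℝ, Real.sin (x - m * (2 * π)) = Real.sin x := by
    intro x
    rw [← Real.sin_add_int_mul_two_pi (x - m * (2 * π)) m]
    ring_nf
  have hl0 : 0 ≤ l - m * (2 * π) := Int.sub_floor_div_mul_nonneg l h2π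
  have hl2 : l - m * (2 * π) < 2 * π := Int.sub_floor_div_mul_lt l h2π
  have hsl' : 0 < Real.sin (l - m * (2 * π)) := by rw [hshift]; exact hl
  have hsr' : 0 < Real.sin (r - m * (2 * π)) := by rw [hshift]; exact hr
  -- key: x ∈ [0, 2π), sin x > 0 → 0 < x < π
  have key : ∀ x : ℝ, 0 ≤ x → x < 2 * π → 0 < Real.sin x → 0 < x ∧ x < π := by
    intro x hx0 hx2 hsx
    have hxpos : 0 < x := by
      rcases eq_or_lt_of_le hx0 with h | h
      · rw [← h] at hsx; simp at hsx
      · exact h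
    refine ⟨hxpos, ?_⟩
    by_contra hxe
    push_neg at hxe
    have h1 : Real.sin x = -Real.sin (x - π) := by
      rw [← Real.sin_add_pi]; ring_nf
    have h2 : 0 ≤ Real.sin (x - π) :=
      Real.sin_nonneg_of_nonneg_of_le_pi (by linarith) (by linarith)
    rw [h1] at hsx; linarith
  obtain ⟨hlp, hlπ⟩ := key _ hl0 hl2 hsl'
  have hr0 : 0 ≤ r - m * (2 * π) := by linarith
  have hr2 : r - m * (2 * π) < 2 * π := by linarith
  obtain ⟨hrp, hrπ⟩ := key _ hr0 hr2 hsr'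
  intro t ht
  rw [← hshift t]
  exact Real.sin_pos_of_pos_of_lt_pi (by obtain ⟨h1, h2⟩ := ht; linarith)
    (by obtain ⟨h1, h2⟩ := ht; linarith)

lemma not_tendsto_atTop_atBot {l : Filter ℝ} [l.NeBot] {g : ℝ → ℝ}
    (h1 : Tendsto g l atTop) (h2 : Tendsto g l atBot) : False := by
  obtain ⟨x, hx1, hx2⟩ :=
    ((h1.eventually_gt_atTop 0).and (h2.eventually_lt_atBot 0)).exists
  linarith

set_option maxHeartbeats 1000000 in
theorem stmt_1 (σ τ τs : ℝ) (hσ0 : 0 < σ) (hσ1 : σ ≤ 1)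
    (hk : ∀ k : ℤ, τ ≠ τs + k * π / σ ∧ τ + π ≠ τs + k * π / σ)
    (f : ℝ → ℝ)
    (hf : f = fun θ : ℝ => Real.sin (σ * (θ - τs)) / (Real.sin (θ - τ)) ^ σ) :
    Xor'
      ((MonotoneOn f (Set.Ioo τ (τ + π)) ∨ AntitoneOn f (Set.Ioo τ (τ + π))) ∧
        ((Tendsto f (𝓝[>] τ) atTop ∧ Tendsto f (𝓝[<] (τ + π)) atBot) ∨
         (Tendsto f (𝓝[>] τ) atBot ∧ Tendsto f (𝓝[<] (τ + π)) atTop)))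
      ((¬ (MonotoneOn f (Set.Ioo τ (τ + π)) ∨ AntitoneOn f (Set.Ioo τ (τ + π)))) ∧
        ((Tendsto f (𝓝[>] τ) atTop ∧ Tendsto f (𝓝[<] (τ + π)) atTop) ∨
         (Tendsto f (𝓝[>] τ) atBot ∧ Tendsto f (𝓝[<] (τ + π)) atBot))) := by
  have hπ := Real.pi_pos
  set A := Real.sin (σ * (τ - τs)) with hA
  set B := Real.sin (σ * (τ + π - τs)) with hB
  have hσne : σ ≠ 0 := hσ0.ne'
  have hAne : A ≠ 0 := by
    intro h
    obtain ⟨n, hn⟩ := Real.sin_eq_zero_iff.mp h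
    exact (hk n).1 (by field_simp; linarith)
  have hBne : B ≠ 0 := by
    intro h
    obtain ⟨n, hn⟩ := Real.sin_eq_zero_iff.mp h
    exact (hk n).2 (by field_simp; linarith)
  have hmemL : Set.Ioo τ (τ + π) ∈ 𝓝[>] τ :=
    Ioo_mem_nhdsGT_of_mem ⟨le_refl τ, by linarith⟩
  have hmemR : Set.Ioo τ (τ + π) ∈ 𝓝[<] (τ + π) :=
    Ioo_mem_nhdsLT_of_mem ⟨by linarith, le_refl _⟩
  have hden : ∀ θ ∈ Set.Ioo τ (τ + π), 0 < Real.sin (θ - τ) := fun θ hθ =>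
    Real.sin_pos_of_pos_of_lt_pi (by linarith [hθ.1]) (by linarith [hθ.2])
  -- numerator limits
  have contnum : Continuous fun θ : ℝ => Real.sin (σ * (θ - τs)) :=
    Real.continuous_sin.comp (continuous_const.mul (continuous_sub_right τs))
  have hnumL : Tendsto (fun θ : ℝ => Real.sin (σ * (θ - τs))) (𝓝[>] τ) (𝓝 A) :=
    (contnum.tendsto τ).mono_left nhdsWithin_le_nhds
  have hnumR : Tendsto (fun θ : ℝ => Real.sin (σ * (θ - τs))) (𝓝[<] (τ + π)) (𝓝 B) :=
    (contnum.tendsto (τ + π)).mono_left nhdsWithin_le_nhds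
  -- denominator limits
  have hdenL : Tendsto (fun θ : ℝ => Real.sin (θ - τ) ^ σ) (𝓝[>] τ) (𝓝[>] 0) := by
    apply tendsto_nhdsWithin_of_tendsto_nhds_of_eventually_within
    · have hc : Continuous fun θ : ℝ => Real.sin (θ - τ) := Real.continuous_sin.comp (continuous_sub_right τ)
      have h1 : Tendsto (fun θ : ℝ => Real.sin (θ - τ)) (𝓝[>] τ) (𝓝 0) := by
        have := (hc.tendsto τ).mono_left (nhdsWithin_le_nhds (s := Set.Ioi τ))
        simpa using this
      have h2 : ContinuousAt (fun x : ℝ => x ^ σ) 0 :=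
        Real.continuousAt_rpow_const 0 σ (Or.inr hσ0.le)
      have := h2.tendsto.comp h1
      simpa [Function.comp_def, Real.zero_rpow hσne] using this
    · filter_upwards [hmemL] with θ hθ using Real.rpow_pos_of_pos (hden θ hθ) σ
  have hdenR : Tendsto (fun θ : ℝ => Real.sin (θ - τ) ^ σ) (𝓝[<] (τ + π)) (𝓝[>] 0) := by
    apply tendsto_nhdsWithin_of_tendsto_nhds_of_eventually_within
    · have hc : Continuous fun θ : ℝ => Real.sin (θ - τ) := Real.continuous_sin.comp (continuous_sub_right τ)
      have h1 : Tendsto (fun θ : ℝ => Real.sin (θ - τ)) (𝓝[<] (τ + π)) (𝓝 0) := by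
        have := (hc.tendsto (τ + π)).mono_left (nhdsWithin_le_nhds (s := Set.Iio (τ + π)))
        simpa [Real.sin_pi] using this
      have h2 : ContinuousAt (fun x : ℝ => x ^ σ) 0 :=
        Real.continuousAt_rpow_const 0 σ (Or.inr hσ0.le)
      have := h2.tendsto.comp h1
      simpa [Function.comp_def, Real.zero_rpow hσne] using this
    · filter_upwards [hmemR] with θ hθ using Real.rpow_pos_of_pos (hden θ hθ) σ
  have hfol : f = fun θ : ℝ =>
      Real.sin (σ * (θ - τs)) * ((Real.sin (θ - τ)) ^ σ)⁻¹ := by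
    rw [hf]; funext θ; rw [div_eq_mul_inv]
  have limLtop : 0 < A → Tendsto f (𝓝[>] τ) atTop := fun h => by
    rw [hfol]; exact Filter.Tendsto.pos_mul_atTop h hnumL hdenL.inv_tendsto_nhdsGT_zero
  have limLbot : A < 0 → Tendsto f (𝓝[>] τ) atBot := fun h => by
    rw [hfol]; exact Filter.Tendsto.neg_mul_atTop h hnumL hdenL.inv_tendsto_nhdsGT_zero
  have limRtop : 0 < B → Tendsto f (𝓝[<] (τ + π)) atTop := fun h => by
    rw [hfol]; exact Filter.Tendsto.pos_mul_atTop h hnumR hdenR.inv_tendsto_nhdsGT_zero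
  have limRbot : B < 0 → Tendsto f (𝓝[<] (τ + π)) atBot := fun h => by
    rw [hfol]; exact Filter.Tendsto.neg_mul_atTop h hnumR hdenR.inv_tendsto_nhdsGT_zero
  -- derivative
  have hD : ∀ θ ∈ Set.Ioo τ (τ + π), HasDerivAt f
      (σ * Real.sin ((θ - τ) - σ * (θ - τs)) / Real.sin (θ - τ) ^ (σ + 1)) θ := by
    intro θ hθ
    have hs := hden θ hθ
    have hu : HasDerivAt (fun θ : ℝ => Real.sin (σ * (θ - τs)))
        (Real.cos (σ * (θ - τs)) * σ) θ := by
      have h1 : HasDerivAt (fun θ : ℝ => σ * (θ - τs)) σ θ := by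
        simpa using ((hasDerivAt_id θ).sub_const τs).const_mul σ
      exact (Real.hasDerivAt_sin _).comp θ h1
    have hv0 : HasDerivAt (fun θ : ℝ => Real.sin (θ - τ)) (Real.cos (θ - τ)) θ := by
      simpa [Function.comp_def] using (Real.hasDerivAt_sin (θ - τ)).comp θ ((hasDerivAt_id θ).sub_const τ)
    have hv : HasDerivAt (fun θ : ℝ => Real.sin (θ - τ) ^ σ)
        (Real.cos (θ - τ) * σ * Real.sin (θ - τ) ^ (σ - 1)) θ :=
      hv0.rpow_const (Or.inl hs.ne')
    have hvne : Real.sin (θ - τ) ^ σ ≠ 0 := (Real.rpow_pos_of_pos hs σ).ne'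
    have hdiv := hu.div hv hvne
    rw [hf]
    refine hdiv.congr_deriv ?_
    have e1 : Real.sin (θ - τ) ^ σ = Real.sin (θ - τ) ^ (σ - 1) * Real.sin (θ - τ) := by
      rw [← Real.rpow_add_one hs.ne' (σ - 1)]; ring_nf
    have e2 : Real.sin (θ - τ) ^ (σ + 1) = Real.sin (θ - τ) ^ σ * Real.sin (θ - τ) :=
      Real.rpow_add_one hs.ne' σ
    have hPne : Real.sin (θ - τ) ^ (σ - 1) ≠ 0 := (Real.rpow_pos_of_pos hs _).ne'
    rw [Real.sin_sub (θ - τ) (σ * (θ - τs)), e2, e1]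
    field_simp
  -- continuity of f on Ioo
  have hcont : ContinuousOn f (Set.Ioo τ (τ + π)) := fun θ hθ =>
    ((hD θ hθ).differentiableAt.continuousAt).continuousWithinAt
  -- g endpoints
  set l := σ * (τs - τ) with hl
  set r := σ * (τs - τ) + (1 - σ) * π with hr
  have hsl : Real.sin l = -A := by
    rw [hl, hA, show σ * (τs - τ) = -(σ * (τ - τs)) by ring, Real.sin_neg]
  have hsr : Real.sin r = B := by
    rw [hr, hB, show σ * (τs - τ) + (1 - σ) * π = π - σ * (τ + π - τs) by ring,
      Real.sin_pi_sub]
  have hlr : l ≤ r := by nlinarith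
  have hlen : r - l < π := by nlinarith
  have hgmem : ∀ θ ∈ Set.Ioo τ (τ + π), (θ - τ) - σ * (θ - τs) ∈ Set.Icc l r := by
    intro θ hθ
    obtain ⟨h1, h2⟩ := hθ
    constructor
    · rw [hl]; nlinarith
    · rw [hr]; nlinarith
  -- not-monotone helpers
  have hmid : τ + π / 2 ∈ Set.Ioo τ (τ + π) := ⟨by linarith, by linarith⟩
  have nomonoL : Tendsto f (𝓝[>] τ) atTop → ¬ MonotoneOn f (Set.Ioo τ (τ + π)) := by
    intro ht hmono
    have hev : ∀ᶠ θ in 𝓝[>] τ, f (τ + π / 2) < f θ ∧ θ ∈ Set.Ioo τ (τ + π / 2) :=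
      (ht.eventually_gt_atTop _).and
        (Ioo_mem_nhdsGT_of_mem ⟨le_refl τ, by linarith⟩)
    obtain ⟨θ, h1, h2⟩ := hev.exists
    have : f θ ≤ f (τ + π / 2) :=
      hmono ⟨h2.1, by linarith [h2.2]⟩ hmid (by linarith [h2.2])
    linarith
  have noantiL : Tendsto f (𝓝[>] τ) atBot → ¬ AntitoneOn f (Set.Ioo τ (τ + π)) := by
    intro ht hanti
    have hev : ∀ᶠ θ in 𝓝[>] τ, f θ < f (τ + π / 2) ∧ θ ∈ Set.Ioo τ (τ + π / 2) :=
      (ht.eventually_lt_atBot _).and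
        (Ioo_mem_nhdsGT_of_mem ⟨le_refl τ, by linarith⟩)
    obtain ⟨θ, h1, h2⟩ := hev.exists
    have : f (τ + π / 2) ≤ f θ :=
      hanti ⟨h2.1, by linarith [h2.2]⟩ hmid (by linarith [h2.2])
    linarith
  have noantiR : Tendsto f (𝓝[<] (τ + π)) atTop → ¬ AntitoneOn f (Set.Ioo τ (τ + π)) := by
    intro ht hanti
    have hev : ∀ᶠ θ in 𝓝[<] (τ + π), f (τ + π / 2) < f θ ∧ θ ∈ Set.Ioo (τ + π / 2) (τ + π) :=
      (ht.eventually_gt_atTop _).and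
        (Ioo_mem_nhdsLT_of_mem ⟨by linarith, le_refl _⟩)
    obtain ⟨θ, h1, h2⟩ := hev.exists
    have : f θ ≤ f (τ + π / 2) :=
      hanti hmid ⟨by linarith [h2.1], h2.2⟩ (le_of_lt h2.1)
    linarith
  have nomonoR : Tendsto f (𝓝[<] (τ + π)) atBot → ¬ MonotoneOn f (Set.Ioo τ (τ + π)) := by
    intro ht hmono
    have hev : ∀ᶠ θ in 𝓝[<] (τ + π), f θ < f (τ + π / 2) ∧ θ ∈ Set.Ioo (τ + π / 2) (τ + π) :=
      (ht.eventually_lt_atBot _).and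
        (Ioo_mem_nhdsLT_of_mem ⟨by linarith, le_refl _⟩)
    obtain ⟨θ, h1, h2⟩ := hev.exists
    have : f (τ + π / 2) ≤ f θ :=
      hmono hmid ⟨by linarith [h2.1], h2.2⟩ (le_of_lt h2.1)
    linarith
  rcases lt_or_gt_of_ne hAne with hAneg | hApos <;>
    rcases lt_or_gt_of_ne hBne with hBneg | hBpos
  · -- A < 0, B < 0 : both atBot, not monotone
    right
    have hLB := limLbot hAneg
    have hRB := limRbot hBneg
    refine ⟨⟨?_, Or.inr ⟨hLB, hRB⟩⟩, ?_⟩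
    · rintro (hmono | hanti)
      · exact nomonoR hRB hmono
      · exact noantiL hLB hanti
    · rintro ⟨-, hlim⟩
      rcases hlim with ⟨h1, _⟩ | ⟨_, h2⟩
      · exact not_tendsto_atTop_atBot h1 hLB
      · exact not_tendsto_atTop_atBot h2 hRB
  · -- A < 0, B > 0 : monotone increasing, (atBot, atTop)
    left
    have hspos : ∀ t ∈ Set.Icc l r, 0 < Real.sin t :=
      sin_pos_on_Icc (by rw [hsl]; linarith) (by rw [hsr]; linarith) hlr hlen
    have hmono : MonotoneOn f (Set.Ioo τ (τ + π)) := by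
      apply StrictMonoOn.monotoneOn
      apply strictMonoOn_of_deriv_pos (convex_Ioo _ _) hcont
      intro θ hθ
      rw [interior_Ioo] at hθ
      rw [(hD θ hθ).deriv]
      have h1 := hspos _ (hgmem θ hθ)
      have h2 := Real.rpow_pos_of_pos (hden θ hθ) (σ + 1)
      positivity
    refine ⟨⟨Or.inl hmono, Or.inr ⟨limLbot hAneg, limRtop hBpos⟩⟩, ?_⟩
    rintro ⟨hq, -⟩
    exact hq (Or.inl hmono)
  · -- A > 0, B < 0 : antitone, (atTop, atBot)
    left
    have hspos : ∀ t ∈ Set.Icc (l + π) (r + π), 0 < Real.sin t :=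
      sin_pos_on_Icc (by rw [Real.sin_add_pi, hsl]; linarith)
        (by rw [Real.sin_add_pi, hsr]; linarith) (by linarith) (by linarith)
    have hsneg : ∀ t ∈ Set.Icc l r, Real.sin t < 0 := by
      intro t ht
      have := hspos (t + π) ⟨by linarith [ht.1], by linarith [ht.2]⟩
      rw [Real.sin_add_pi] at this
      linarith
    have hanti : AntitoneOn f (Set.Ioo τ (τ + π)) := by
      apply StrictAntiOn.antitoneOn
      apply strictAntiOn_of_deriv_neg (convex_Ioo _ _) hcont
      intro θ hθ
      rw [interior_Ioo] at hθ
      rw [(hD θ hθ).deriv]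
      have h1 := hsneg _ (hgmem θ hθ)
      have h2 := Real.rpow_pos_of_pos (hden θ hθ) (σ + 1)
      exact div_neg_of_neg_of_pos (by nlinarith) h2
    refine ⟨⟨Or.inr hanti, Or.inl ⟨limLtop hApos, limRbot hBneg⟩⟩, ?_⟩
    rintro ⟨hq, -⟩
    exact hq (Or.inr hanti)
  · -- A > 0, B > 0 : both atTop, not monotone
    right
    have hLT := limLtop hApos
    have hRT := limRtop hBpos
    refine ⟨⟨?_, Or.inl ⟨hLT, hRT⟩⟩, ?_⟩
    · rintro (hmono | hanti)
      · exact nomonoL hLT hmono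
      · exact noantiR hRT hanti
    · rintro ⟨-, hlim⟩
      rcases hlim with ⟨_, h1⟩ | ⟨h2, _⟩
      · exact not_tendsto_atTop_atBot hRT h1
      · exact not_tendsto_atTop_atBot hLT h2
end

section
/- Let τ_0 < τ_1 < ⋯ < τ_{μ−1} be real numbers with τ_{μ−1} − τ_0 < π, and extend by τ_{ρ+kμ} = τ_ρ + kπ. Then for a tuple (k_0, …, k_{μ−1}) ∈ ℤ^μ, the intersection ⋂_{ρ=0}^{μ−1} (τ_ρ + (k_ρ−1)π, τ_ρ + k_ρπ) is non-empty if and only if all k_ρ satisfy k_0 ≥ k_1 ≥ ⋯ ≥ k_{μ−1} ≥ k_0 − 1; and in that case the intersection equals an interval of the form (τ_{ν−1}, τ_ν) for some ν ∈ ℤ. -/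
open Real Set

theorem stmt_5 (μ : ℕ) (hμ : 0 < μ) (τ : Fin μ → ℝ) (hmono : StrictMono τ)
    (hπ : τ ⟨μ - 1, Nat.sub_lt hμ Nat.one_pos⟩ - τ ⟨0, hμ⟩ < π)
    (T : ℤ → ℝ)
    (hT : ∀ (ρ : Fin μ) (k : ℤ), T ((ρ : ℕ) + k * μ) = τ ρ + k * π)
    (kvec : Fin μ → ℤ) :
    ((⋂ ρ : Fin μ,
        Set.Ioo (τ ρ + ((kvec ρ : ℝ) - 1) * π) (τ ρ + (kvec ρ : ℝ) * π)).Nonempty ↔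
      (Antitone kvec ∧ kvec ⟨0, hμ⟩ - 1 ≤ kvec ⟨μ - 1, Nat.sub_lt hμ Nat.one_pos⟩))
    ∧ ((⋂ ρ : Fin μ,
          Set.Ioo (τ ρ + ((kvec ρ : ℝ) - 1) * π) (τ ρ + (kvec ρ : ℝ) * π)).Nonempty →
        ∃ ν : ℤ,
          (⋂ ρ : Fin μ,
            Set.Ioo (τ ρ + ((kvec ρ : ℝ) - 1) * π) (τ ρ + (kvec ρ : ℝ) * π))
            = Set.Ioo (T (ν - 1)) (T ν)) := by
  have hπpos : (0:ℝ) < π := Real.pi_pos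
  set i0 : Fin μ := ⟨0, hμ⟩ with hi0
  set iL : Fin μ := ⟨μ - 1, Nat.sub_lt hμ Nat.one_pos⟩ with hiLdef
  have h0le : ∀ ρ : Fin μ, i0 ≤ ρ := fun ρ => by
    rw [Fin.le_def]; exact Nat.zero_le _
  have hleL : ∀ ρ : Fin μ, ρ ≤ iL := fun ρ => by
    rw [Fin.le_def]; have := ρ.isLt; simp only [hiLdef]; omega
  have key : (⋂ ρ : Fin μ,
        Set.Ioo (τ ρ + ((kvec ρ : ℝ) - 1) * π) (τ ρ + (kvec ρ : ℝ) * π)).Nonempty ↔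
      (Antitone kvec ∧ kvec i0 - 1 ≤ kvec iL) := by
    constructor
    · rintro ⟨x, hx⟩
      rw [Set.mem_iInter] at hx
      constructor
      · intro ρ σ hρσ
        have h1 := (hx σ).1
        have h2 := (hx ρ).2
        have hτ : τ ρ ≤ τ σ := hmono.monotone hρσ
        have hlt : ((kvec σ:ℝ) - 1) * π < (kvec ρ:ℝ) * π := by linarith
        have h3 : (kvec σ:ℝ) - 1 < (kvec ρ:ℝ) := (mul_lt_mul_iff_of_pos_right hπpos).mp hlt
        have h4 : kvec σ - 1 < kvec ρ := by exact_mod_cast h3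
        omega
      · have h1 := (hx i0).1
        have h2 := (hx iL).2
        have hlt : ((kvec i0:ℝ) - 1) * π < ((kvec iL:ℝ) + 1) * π := by nlinarith
        have h3 : (kvec i0:ℝ) - 1 < (kvec iL:ℝ) + 1 := (mul_lt_mul_iff_of_pos_right hπpos).mp hlt
        have h4 : kvec i0 - 1 < kvec iL + 1 := by exact_mod_cast h3
        omega
    · rintro ⟨hanti, hbound⟩
      have hpair : ∀ ρ σ : Fin μ,
          τ ρ + ((kvec ρ:ℝ) - 1) * π < τ σ + (kvec σ:ℝ) * π := by
        intro ρ σ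
        have hρ0 : kvec ρ ≤ kvec i0 := hanti (h0le ρ)
        have hσL : kvec iL ≤ kvec σ := hanti (hleL σ)
        rcases le_or_gt ρ σ with hle | hlt
        · rcases eq_or_lt_of_le hle with rfl | hlt'
          · nlinarith
          · have hτ : τ ρ < τ σ := hmono hlt'
            have hk : (kvec ρ:ℝ) - 1 ≤ (kvec σ:ℝ) := by
              have : kvec ρ - 1 ≤ kvec σ := by omega
              exact_mod_cast this
            nlinarith
        · have hk : (kvec ρ:ℝ) ≤ (kvec σ:ℝ) := by exact_mod_cast hanti hlt.le
          have hτρ : τ ρ ≤ τ iL := hmono.monotone (hleL ρ)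
          have hτσ : τ i0 ≤ τ σ := hmono.monotone (h0le σ)
          nlinarith
      have huniv : (Finset.univ : Finset (Fin μ)).Nonempty := ⟨i0, Finset.mem_univ i0⟩
      set A := Finset.univ.sup' huniv (fun ρ => τ ρ + ((kvec ρ:ℝ) - 1) * π) with hA
      set B := Finset.univ.inf' huniv (fun ρ => τ ρ + (kvec ρ:ℝ) * π) with hB
      have hAB : A < B := by
        rw [hA, Finset.sup'_lt_iff]
        intro ρ _
        rw [hB, Finset.lt_inf'_iff]
        intro σ _
        exact hpair ρ σ
      refine ⟨(A+B)/2, Set.mem_iInter.2 fun ρ => ?_⟩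
      constructor
      · have := Finset.le_sup' (fun ρ => τ ρ + ((kvec ρ:ℝ) - 1) * π) (Finset.mem_univ ρ)
        rw [← hA] at this; linarith
      · have := Finset.inf'_le (fun ρ => τ ρ + (kvec ρ:ℝ) * π) (Finset.mem_univ ρ)
        rw [← hB] at this; linarith
  refine ⟨key, ?_⟩
  intro hne
  obtain ⟨hanti, hbound⟩ := key.mp hne
  have hboundsρ : ∀ ρ, kvec i0 - 1 ≤ kvec ρ ∧ kvec ρ ≤ kvec i0 := fun ρ =>
    ⟨hbound.trans (hanti (hleL ρ)), hanti (h0le ρ)⟩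
  by_cases hall : ∀ ρ, kvec ρ = kvec i0
  · refine ⟨kvec i0 * μ, ?_⟩
    have hTν : T (kvec i0 * μ) = τ i0 + (kvec i0:ℝ) * π := by
      have h := hT i0 (kvec i0)
      simpa using h
    have hTν1 : T (kvec i0 * μ - 1) = τ iL + ((kvec i0:ℝ) - 1) * π := by
      have h := hT iL (kvec i0 - 1)
      have hiLv : (iL:ℕ) = μ - 1 := rfl
      have e : ((iL:ℕ):ℤ) + (kvec i0 - 1) * μ = kvec i0 * μ - 1 := by
        have h1 : ((iL:ℕ):ℤ) = (μ:ℤ) - 1 := by rw [hiLv]; omega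
        rw [h1]; ring
      rw [e] at h
      push_cast at h
      exact h
    rw [hTν1, hTν]
    ext x
    simp only [Set.mem_iInter, Set.mem_Ioo]
    constructor
    · intro hx
      have h1 := (hx iL).1
      have h2 := (hx i0).2
      rw [hall iL] at h1
      exact ⟨h1, h2⟩
    · rintro ⟨h1, h2⟩ ρ
      rw [hall ρ]
      have hτ1 : τ ρ ≤ τ iL := hmono.monotone (hleL ρ)
      have hτ2 : τ i0 ≤ τ ρ := hmono.monotone (h0le ρ)
      exact ⟨by linarith, by linarith⟩
  · push_neg at hall
    obtain ⟨ρ0, hρ0⟩ := hall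
    have hsne : (Finset.univ.filter (fun ρ => kvec ρ ≠ kvec i0)).Nonempty :=
      ⟨ρ0, by simp [hρ0]⟩
    set m : Fin μ := Finset.min' _ hsne with hm
    have hmmem := Finset.min'_mem _ hsne
    rw [← hm, Finset.mem_filter] at hmmem
    have hkm : kvec m = kvec i0 - 1 := by
      have := hboundsρ m
      have := hmmem.2
      omega
    have hm0 : 0 < (m:ℕ) := by
      by_contra h
      have hi0v : (i0:ℕ) = 0 := rfl
      have hmi0 : m = i0 := Fin.ext (by rw [hi0v]; omega)
      rw [hmi0] at hkm
      omega
    have hmlt := m.isLt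
    have hpμ : (m:ℕ) - 1 < μ := by omega
    set p : Fin μ := ⟨(m:ℕ) - 1, hpμ⟩ with hpdef
    have hpv : (p:ℕ) = (m:ℕ) - 1 := rfl
    have hpm : p < m := by rw [Fin.lt_def, hpv]; omega
    have hkp : kvec p = kvec i0 := by
      by_contra h
      have : m ≤ p := Finset.min'_le _ p (by
        simp only [Finset.mem_filter, Finset.mem_univ, true_and]; exact h)
      exact absurd this (not_le.mpr hpm)
    have hge : ∀ ρ, kvec ρ = kvec i0 - 1 → m ≤ ρ := by
      intro ρ h
      exact Finset.min'_le _ ρ (by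
        simp only [Finset.mem_filter, Finset.mem_univ, true_and]; omega)
    have hle' : ∀ ρ, kvec ρ = kvec i0 → ρ ≤ p := by
      intro ρ h
      by_contra hc
      push_neg at hc
      have hmρ : m ≤ ρ := by
        rw [Fin.le_def]
        rw [Fin.lt_def, hpv] at hc
        omega
      have := hanti hmρ
      omega
    refine ⟨(m:ℕ) + (kvec i0 - 1) * μ, ?_⟩
    have hTν : T ((m:ℕ) + (kvec i0 - 1) * μ) = τ m + ((kvec i0:ℝ) - 1) * π := by
      have h := hT m (kvec i0 - 1)
      push_cast at h
      exact h
    have hTν1 : T ((m:ℕ) + (kvec i0 - 1) * μ - 1) = τ p + ((kvec i0:ℝ) - 1) * π := by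
      have h := hT p (kvec i0 - 1)
      have e : ((p:ℕ):ℤ) + (kvec i0 - 1) * μ = (m:ℕ) + (kvec i0 - 1) * μ - 1 := by
        have h1 : ((p:ℕ):ℤ) = ((m:ℕ):ℤ) - 1 := by rw [hpv]; omega
        rw [h1]; ring
      rw [e] at h
      push_cast at h
      exact h
    rw [hTν1, hTν]
    ext x
    simp only [Set.mem_iInter, Set.mem_Ioo]
    constructor
    · intro hx
      have h1 := (hx p).1
      have h2 := (hx m).2
      rw [hkp] at h1
      rw [hkm] at h2
      push_cast at h2
      exact ⟨h1, by linarith⟩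
    · rintro ⟨h1, h2⟩ ρ
      rcases (by have := hboundsρ ρ; omega :
          kvec ρ = kvec i0 ∨ kvec ρ = kvec i0 - 1) with h | h
      · have hτ1 : τ ρ ≤ τ p := hmono.monotone (hle' ρ h)
        have hτ2 : τ i0 ≤ τ ρ := hmono.monotone (h0le ρ)
        have hτ3 : τ m ≤ τ iL := hmono.monotone (hleL m)
        rw [h]
        constructor
        · linarith
        · nlinarith
      · have hτ1 : τ m ≤ τ ρ := hmono.monotone (hge ρ h)
        have hτ2 : τ ρ ≤ τ iL := hmono.monotone (hleL ρ)
        have hτ3 : τ i0 ≤ τ p := hmono.monotone (h0le p)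
        rw [h]
        push_cast
        constructor
        · nlinarith
        · linarith
end
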